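/- A connected graph G either has a perfect matching or is factor-critical if and only if odd(G - S) ≤ |S| for all nonempty subsets S of V(G). -/

import Mathlib

open SimpleGraph

/-- Number of odd components of the graph obtained from `G` by deleting `S`. -/
noncomputable def oddComp {V : Type*} (G : SimpleGraph V) (S : Set V) : ℕ :=
  Nat.card {C : (G.induce Sᶜ).ConnectedComponent // Odd (Nat.card C.supp)}

section TutteAux

set_option linter.unusedSectionVars false

variable {V : Type*} [Fintype V] {G : SimpleGraph V}

/-- restricted adjacency within a set `B`. -/
def radj (G : SimpleGraph V) (B : Set V) (a b : V) : Prop := G.Adj a b ∧ a ∈ B ∧ b ∈ B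

lemma radj_symm (G : SimpleGraph V) (B : Set V) : Symmetric (radj G B) :=
  fun _ _ h => ⟨h.1.symm, h.2.2, h.2.1⟩

/-- connectivity within `B`. -/
def conn (G : SimpleGraph V) (B : Set V) (x y : V) : Prop :=
  x ∈ B ∧ Relation.ReflTransGen (radj G B) x y

lemma conn.mem_left {B : Set V} {x y : V} (h : conn G B x y) : x ∈ B := h.1

lemma conn.mem_right {B : Set V} {x y : V} (h : conn G B x y) : y ∈ B := by
  obtain ⟨hx, h⟩ := h
  induction h with
  | refl => exact hx
  | tail _ h ih => exact h.2.2

lemma conn.refl {B : Set V} {x : V} (hx : x ∈ B) : conn G B x x := ⟨hx, .refl⟩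

lemma conn.symm {B : Set V} {x y : V} (h : conn G B x y) : conn G B y x :=
  ⟨h.mem_right, by haveI : Std.Symm (radj G B) := ⟨fun _ _ h => radj_symm G B h⟩; exact Std.Symm.symm _ _ h.2⟩

lemma conn.trans {B : Set V} {x y z : V} (h : conn G B x y) (h' : conn G B y z) :
    conn G B x z := ⟨h.1, h.2.trans h'.2⟩

lemma conn.mono {B B' : Set V} (hBB : B ⊆ B') {x y : V} (h : conn G B x y) :
    conn G B' x y := by
  refine ⟨hBB h.1, Relation.ReflTransGen.mono ?_ _ _ h.2⟩
  exact fun a b hab => ⟨hab.1, hBB hab.2.1, hBB hab.2.2⟩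

/-- the connected component of `x` in `G` restricted to `B`. -/
def compOf (G : SimpleGraph V) (B : Set V) (x : V) : Set V := {y | conn G B x y}

lemma compOf_subset {B : Set V} {x : V} : compOf G B x ⊆ B := fun _ hy => hy.mem_right

lemma mem_compOf_self {B : Set V} {x : V} (hx : x ∈ B) : x ∈ compOf G B x := conn.refl hx

lemma compOf_eq_of_mem {B : Set V} {x y : V} (h : y ∈ compOf G B x) :
    compOf G B x = compOf G B y := by
  ext z
  exact ⟨fun hz => (conn.symm h).trans hz, fun hz => conn.trans h hz⟩

/-- components are closed under adjacency within `B`. -/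
lemma compOf_closed {B : Set V} {x y z : V} (hy : y ∈ compOf G B x)
    (hadj : G.Adj y z) (hz : z ∈ B) : z ∈ compOf G B x :=
  hy.trans ⟨hy.mem_right, Relation.ReflTransGen.single ⟨hadj, hy.mem_right, hz⟩⟩

def IsComp (G : SimpleGraph V) (B : Set V) (K : Set V) : Prop :=
  ∃ x ∈ B, K = compOf G B x

lemma IsComp.subset {B K : Set V} (h : IsComp G B K) : K ⊆ B := by
  obtain ⟨x, _, rfl⟩ := h; exact compOf_subset

lemma IsComp.nonempty {B K : Set V} (h : IsComp G B K) : K.Nonempty := by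
  obtain ⟨x, hx, rfl⟩ := h; exact ⟨x, mem_compOf_self hx⟩

lemma IsComp.closed {B K : Set V} (h : IsComp G B K) {y z : V} (hy : y ∈ K)
    (hadj : G.Adj y z) (hz : z ∈ B) : z ∈ K := by
  obtain ⟨x, hx, rfl⟩ := h; exact compOf_closed hy hadj hz

lemma IsComp.eq_of_mem {B K K' : Set V} (h : IsComp G B K) (h' : IsComp G B K')
    {y : V} (hy : y ∈ K) (hy' : y ∈ K') : K = K' := by
  obtain ⟨x, hx, rfl⟩ := h; obtain ⟨x', hx', rfl⟩ := h'
  rw [compOf_eq_of_mem hy, compOf_eq_of_mem hy']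

lemma IsComp.disjoint_or_eq {B K K' : Set V} (h : IsComp G B K) (h' : IsComp G B K') :
    Disjoint K K' ∨ K = K' := by
  by_cases hd : Disjoint K K'
  · exact Or.inl hd
  · obtain ⟨y, hy, hy'⟩ := Set.not_disjoint_iff.mp hd
    exact Or.inr (h.eq_of_mem h' hy hy')

lemma isComp_compOf {B : Set V} {x : V} (hx : x ∈ B) : IsComp G B (compOf G B x) :=
  ⟨x, hx, rfl⟩

/-- a component stays inside a component it intersects: chains from a point of `K` stay in `K`. -/
lemma conn_subset_comp {B K : Set V} (h : IsComp G B K) {x y : V} (hx : x ∈ K)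
    (hc : conn G B x y) : y ∈ K := by
  obtain ⟨z, hz, rfl⟩ := h
  exact hx.trans hc

/-- promotion: a subset of `B` which is a component of `B'` (with `B' ⊆ B`) and is
adjacency-closed in `B` is a component of `B`. -/
lemma IsComp.promote {B B' K : Set V} (hsub : B' ⊆ B) (h : IsComp G B' K)
    (hcl : ∀ y ∈ K, ∀ z, G.Adj y z → z ∈ B → z ∈ K) : IsComp G B K := by
  obtain ⟨x, hx, rfl⟩ := h
  refine ⟨x, hsub hx, ?_⟩
  ext y
  constructor
  · exact fun hy => hy.mono hsub
  · rintro ⟨-, hy⟩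
    induction hy with
    | refl => exact mem_compOf_self hx
    | tail _ h ih => exact hcl _ ih _ h.1 h.2.2
/-- restriction: a component of `B` contained in `B' ⊆ B` is a component of `B'`. -/
lemma IsComp.restrict {B B' K : Set V} (hsub : B' ⊆ B) (h : IsComp G B K)
    (hKB' : K ⊆ B') : IsComp G B' K := by
  obtain ⟨x, hx, rfl⟩ := h
  have hx' : x ∈ B' := hKB' (mem_compOf_self hx)
  refine ⟨x, hx', ?_⟩
  ext y
  constructor
  · rintro ⟨-, hy⟩
    have key : ∀ z, Relation.ReflTransGen (radj G B) x z → z ∈ compOf G B x ∧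
        Relation.ReflTransGen (radj G B') x z := by
      intro z hz
      induction hz with
      | refl => exact ⟨mem_compOf_self hx, .refl⟩
      | tail hprev h ih =>
        have hmem := compOf_closed ih.1 h.1 h.2.2
        exact ⟨hmem, ih.2.tail ⟨h.1, hKB' ih.1, hKB' hmem⟩⟩
    exact ⟨hx', (key y hy).2⟩
  · exact fun hy => hy.mono hsub

lemma sum_mod_two {α : Type*} [DecidableEq α] (s : Finset α) (f : α → ℕ) :
    (∑ a ∈ s, f a) % 2 = (s.filter fun a => Odd (f a)).card % 2 := by
  classical
  induction s using Finset.induction with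
  | empty => simp
  | insert _ _ hx ih =>
    rename_i a s
    rw [Finset.sum_insert hx, Finset.filter_insert]
    by_cases h : Odd (f a)
    · rw [if_pos h, Finset.card_insert_of_notMem (by simp [hx])]
      rw [Nat.odd_iff] at h
      omega
    · rw [if_neg h]
      rw [Nat.not_odd_iff] at h
      omega

/-- the finset of components of `G` restricted to `B`. -/
noncomputable def compsF (G : SimpleGraph V) (B : Set V) : Finset (Set V) :=
  (Set.toFinite {K : Set V | IsComp G B K}).toFinset

lemma mem_compsF {B K : Set V} : K ∈ compsF G B ↔ IsComp G B K := by
  simp [compsF]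

/-- the number of odd components of `G` restricted to `B`. -/
noncomputable def oddCount (G : SimpleGraph V) (B : Set V) : ℕ :=
  ((compsF G B).filter (fun K => Odd K.ncard)).card

lemma oddCount_eq (G : SimpleGraph V) (B : Set V) :
    oddCount G B = {K : Set V | IsComp G B K ∧ Odd K.ncard}.ncard := by
  classical
  have h : (Set.toFinite {K : Set V | IsComp G B K ∧ Odd K.ncard}).toFinset
      = (compsF G B).filter (fun K => Odd K.ncard) := by
    ext K
    simp [mem_compsF]
  rw [Set.ncard_eq_toFinset_card _ (Set.toFinite _), h, oddCount]

lemma finsetB_eq_biUnion [DecidableEq V] (G : SimpleGraph V) (B : Set V) :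
    B.toFinite.toFinset = (compsF G B).biUnion (fun K => K.toFinite.toFinset) := by
  classical
  ext v
  simp only [Set.Finite.mem_toFinset, Finset.mem_biUnion, mem_compsF]
  constructor
  · intro hv
    exact ⟨compOf G B v, isComp_compOf hv, by simpa using mem_compOf_self hv⟩
  · rintro ⟨K, hK, hv⟩
    exact hK.subset (by simpa using hv)

lemma ncard_eq_sum_comps (G : SimpleGraph V) (B : Set V) :
    B.ncard = ∑ K ∈ compsF G B, K.ncard := by
  classical
  rw [Set.ncard_eq_toFinset_card B (Set.toFinite _), finsetB_eq_biUnion G B, Finset.card_biUnion]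
  · exact Finset.sum_congr rfl fun K _ => (Set.ncard_eq_toFinset_card K).symm
  · intro K hK K' hK' hne
    rw [Function.onFun, Finset.disjoint_left]
    intro a ha ha'
    rcases (mem_compsF.mp hK).disjoint_or_eq (mem_compsF.mp hK') with hd | he
    · exact Set.disjoint_left.mp hd (by simpa using ha) (by simpa using ha')
    · exact hne he

lemma oddCount_parity (G : SimpleGraph V) (B : Set V) :
    oddCount G B % 2 = B.ncard % 2 := by
  classical
  rw [ncard_eq_sum_comps G B, sum_mod_two]
  rfl

lemma IsComp.transfer {B₁ B₂ K : Set V} (h : IsComp G B₁ K) (hK2 : K ⊆ B₂)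
    (hcl : ∀ y ∈ K, ∀ z, G.Adj y z → z ∈ B₂ → z ∈ K) : IsComp G B₂ K := by
  have h' : IsComp G (B₁ ∩ B₂) K :=
    h.restrict Set.inter_subset_left (Set.subset_inter h.subset hK2)
  exact h'.promote Set.inter_subset_right hcl

lemma mem_oddCompsF {B' K : Set V} :
    K ∈ (compsF G B').filter (fun K => Odd K.ncard) ↔ IsComp G B' K ∧ Odd K.ncard := by
  simp [mem_compsF]

lemma oddCount_exists_pos {B' : Set V} (h : 0 < oddCount G B') :
    ∃ K, IsComp G B' K ∧ Odd K.ncard := by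
  obtain ⟨K, hK⟩ := Finset.card_pos.mp h
  exact ⟨K, mem_oddCompsF.mp hK⟩

lemma le_oddCount {B' : Set V} {s : Finset (Set V)}
    (hs : ∀ K ∈ s, IsComp G B' K ∧ Odd K.ncard) : s.card ≤ oddCount G B' :=
  Finset.card_le_card (fun K hK => mem_oddCompsF.mpr (hs K hK))

lemma tutte_main (G : SimpleGraph V) :
    ∀ n (B : Set V), B.ncard ≤ n →
    (∀ T ⊆ B, oddCount G (B \ T) ≤ T.ncard) →
    ∃ M : G.Subgraph, M.IsMatching ∧ M.verts = B := by
  intro n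
  induction n with
  | zero =>
    intro B hB _
    have : B = ∅ := by
      have := Set.ncard_eq_zero (Set.toFinite B) |>.mp (Nat.le_zero.mp hB)
      exact this
    refine ⟨⊥, ?_, by simp [this]⟩
    intro v hv
    simp [Subgraph.verts_bot] at hv
  | succ n ih =>
    intro B hB hyp
    classical
    rcases Set.eq_empty_or_nonempty B with rfl | hBne
    · refine ⟨⊥, ?_, by simp⟩
      intro v hv
      simp [Subgraph.verts_bot] at hv
    -- step 1: no odd components of B itself
    have hB0 : oddCount G B = 0 := by
      have := hyp ∅ (Set.empty_subset B)
      simpa using this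
    have hBeven : ∀ K, IsComp G B K → ¬ Odd K.ncard := by
      intro K hK hodd
      have : K ∈ (compsF G B).filter (fun K => Odd K.ncard) := mem_oddCompsF.mpr ⟨hK, hodd⟩
      rw [Finset.card_eq_zero.mp hB0] at this
      simp at this
    have hBcard : B.ncard % 2 = 0 := by
      have := oddCount_parity G B
      rw [hB0] at this
      omega
    -- tight sets
    set 𝒯 : Set (Set V) := {T | T ⊆ B ∧ oddCount G (B \ T) = T.ncard} with h𝒯
    have hsingle : ∀ v ∈ B, ({v} : Set V) ∈ 𝒯 := by
      intro v hv
      refine ⟨by simpa using hv, ?_⟩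
      have hpar := oddCount_parity G (B \ {v})
      have hcard : (B \ {v}).ncard = B.ncard - 1 :=
        Set.ncard_diff_singleton_of_mem hv
      have hle := hyp {v} (by simpa using hv)
      have hBpos : 0 < B.ncard := (Set.ncard_pos (Set.toFinite B)).mpr hBne
      simp only [Set.ncard_singleton] at hle ⊢
      omega
    obtain ⟨T, hT𝒯, hTmax⟩ : ∃ T ∈ 𝒯, ∀ T' ∈ 𝒯, T ⊆ T' → T = T' := by
      obtain ⟨T, hT⟩ := (Set.toFinite 𝒯).exists_maximal ⟨_, hsingle hBne.choose hBne.choose_spec⟩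
      exact ⟨T, hT.1, fun T' h1 h2 => le_antisymm h2 (hT.2 h1 h2)⟩
    obtain ⟨hTB, hTtight⟩ := hT𝒯
    have hTmax' : ∀ T' ∈ 𝒯, T ⊆ T' → T = T' := fun T' h1 h2 => hTmax T' h1 h2
    have hTne : T.Nonempty := by
      rcases Set.eq_empty_or_nonempty T with rfl | h
      · obtain ⟨v, hv⟩ := hBne
        have := hTmax' {v} (hsingle v hv) (Set.empty_subset _)
        simp at this
      · exact h
    -- step (a): all components of B \ T are odd
    have hallodd : ∀ K, IsComp G (B \ T) K → Odd K.ncard := by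
      intro K hK
      by_contra hodd
      obtain ⟨u, hu⟩ := hK.nonempty
      have huB : u ∈ B \ T := hK.subset hu
      set T' : Set V := insert u T with hT'def
      have hT'B : T' ⊆ B := Set.insert_subset huB.1 hTB
      have hBT' : B \ T' = (B \ T) \ {u} := by
        ext z; simp [hT'def]; tauto
      have hKcard : (K \ {u}).ncard = K.ncard - 1 :=
        Set.ncard_diff_singleton_of_mem hu
      have hKpos : 0 < K.ncard := (Set.ncard_pos (Set.toFinite K)).mpr hK.nonempty
      have hKeven : K.ncard % 2 = 0 := Nat.not_odd_iff.mp hodd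
      have hpar := oddCount_parity G (K \ {u})
      obtain ⟨K₀, hK₀, hK₀odd⟩ := oddCount_exists_pos (G := G) (B' := K \ {u}) (by omega)
      have hK₀sub : K₀ ⊆ K \ {u} := hK₀.subset
      have hK₀' : IsComp G (B \ T') K₀ := by
        refine hK₀.transfer ?_ ?_
        · rw [hBT']
          exact hK₀sub.trans (Set.diff_subset_diff_left hK.subset)
        · intro y hy z hadj hz
          rw [hBT'] at hz
          have hzK : z ∈ K := hK.closed (hK₀sub hy).1 hadj hz.1
          exact hK₀.closed hy hadj ⟨hzK, hz.2⟩
      set s₁ := (compsF G (B \ T)).filter (fun K => Odd K.ncard) with hs₁def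
      have hs₁card : s₁.card = T.ncard := hTtight
      have htrans : ∀ K' ∈ insert K₀ s₁, IsComp G (B \ T') K' ∧ Odd K'.ncard := by
        intro K' hK'
        rcases Finset.mem_insert.mp hK' with rfl | hK'
        · exact ⟨hK₀', hK₀odd⟩
        obtain ⟨hc, ho⟩ := mem_oddCompsF.mp hK'
        have hne : K' ≠ K := fun h => hodd (h ▸ ho)
        have hdisj : Disjoint K' K := (hc.disjoint_or_eq hK).resolve_right hne
        refine ⟨hc.transfer ?_ ?_, ho⟩
        · rw [hBT']
          intro x hx
          exact ⟨hc.subset hx, fun h => Set.disjoint_left.mp hdisj hx (h ▸ hu)⟩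
        · intro y hy z hadj hz
          rw [hBT'] at hz
          exact hc.closed hy hadj hz.1
      have hK₀new : K₀ ∉ s₁ := by
        intro hmem
        obtain ⟨hc, _⟩ := mem_oddCompsF.mp hmem
        have hne : K₀ ≠ K := fun h => hodd (h ▸ hK₀odd)
        have hdisj : Disjoint K₀ K := (hc.disjoint_or_eq hK).resolve_right hne
        obtain ⟨x, hx⟩ := hK₀.nonempty
        exact Set.disjoint_left.mp hdisj hx (hK₀sub hx).1
      have hcount : T.ncard + 1 ≤ oddCount G (B \ T') := by
        have := le_oddCount htrans
        rwa [Finset.card_insert_of_notMem hK₀new, hs₁card] at this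
      have hT'card : T'.ncard = T.ncard + 1 := by
        rw [hT'def, Set.ncard_insert_of_notMem huB.2 (Set.toFinite T)]
      have hT'tight : T' ∈ 𝒯 := by
        refine ⟨hT'B, le_antisymm (hyp T' hT'B) ?_⟩
        omega
      have heq := hTmax' T' hT'tight (Set.subset_insert u T)
      exact huB.2 (heq ▸ (Set.mem_insert u T))
    -- the components of B \ T
    set O : Finset (Set V) := compsF G (B \ T) with hOdef
    have hOmem : ∀ K ∈ O, IsComp G (B \ T) K := fun K hK => mem_compsF.mp hK
    have hOcard : O.card = T.ncard := by
      rw [← hTtight, oddCount]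
      rw [Finset.filter_true_of_mem (fun K hK => hallodd K (mem_compsF.mp hK))]
    -- neighbour sets in T
    set t : {K // K ∈ O} → Finset V :=
      fun K => (Set.toFinite {z | z ∈ T ∧ ∃ y ∈ K.1, G.Adj y z}).toFinset with htdef
    have htmem : ∀ (K : {K // K ∈ O}) (z : V), z ∈ t K ↔ z ∈ T ∧ ∃ y ∈ K.1, G.Adj y z := by
      intro K z
      simp [htdef]
    -- Hall's condition
    have hhall : ∀ (A : Finset {K // K ∈ O}), A.card ≤ (A.biUnion t).card := by
      intro A
      set T₀ : Set V := ↑(A.biUnion t) with hT₀def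
      have hT₀T : T₀ ⊆ T := by
        intro z hz
        rw [hT₀def, Finset.mem_coe, Finset.mem_biUnion] at hz
        obtain ⟨K, _, hzt⟩ := hz
        exact ((htmem K z).mp hzt).1
      have himg : ∀ K ∈ A.image (Subtype.val), IsComp G (B \ T₀) K ∧ Odd K.ncard := by
        intro K hK
        obtain ⟨⟨K', hK'O⟩, hK'A, rfl⟩ := Finset.mem_image.mp hK
        have hc := hOmem K' hK'O
        refine ⟨hc.transfer ?_ ?_, hallodd K' hc⟩
        · intro x hx
          exact ⟨(hc.subset hx).1, fun hxT₀ => (hc.subset hx).2 (hT₀T hxT₀)⟩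
        · intro y hy z hadj hz
          by_cases hzT : z ∈ T
          · exfalso
            apply hz.2
            rw [hT₀def, Finset.mem_coe, Finset.mem_biUnion]
            exact ⟨⟨K', hK'O⟩, hK'A, (htmem _ z).mpr ⟨hzT, y, hy, hadj⟩⟩
          · exact hc.closed hy hadj ⟨hz.1, hzT⟩
      have h1 : A.card = (A.image Subtype.val).card :=
        (Finset.card_image_of_injective A Subtype.val_injective).symm
      have h2 := le_oddCount himg
      have h3 := hyp T₀ (hT₀T.trans hTB)
      have h4 : T₀.ncard = (A.biUnion t).card := by
        rw [hT₀def, Set.ncard_coe_finset]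
      omega
    obtain ⟨f, hfinj, hfmem⟩ :=
      (Finset.all_card_le_biUnion_card_iff_exists_injective t).mp hhall
    have hfT : ∀ K, f K ∈ T := fun K => ((htmem K (f K)).mp (hfmem K)).1
    have hcardO : Fintype.card {K // K ∈ O} = T.ncard := by
      rw [Fintype.card_coe, hOcard]
    have hfsurj : ∀ z ∈ T, ∃ K, f K = z := by
      by_contra h
      push_neg at h
      obtain ⟨z, hzT, hz⟩ := h
      have himage : (Finset.univ.image f) ⊆ (Set.toFinite (T \ {z})).toFinset := by
        intro w hw
        obtain ⟨K, _, rfl⟩ := Finset.mem_image.mp hw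
        simp only [Set.Finite.mem_toFinset, Set.mem_diff, Set.mem_singleton_iff]
        exact ⟨hfT K, hz K⟩
      have hc1 : (Finset.univ.image f).card = T.ncard := by
        rw [Finset.card_image_of_injective _ hfinj, Finset.card_univ, hcardO]
      have hc2 : ((Set.toFinite (T \ {z})).toFinset).card = (T \ {z}).ncard :=
        (Set.ncard_eq_toFinset_card _ (Set.toFinite _)).symm
      have hc3 : (T \ {z}).ncard = T.ncard - 1 :=
        Set.ncard_diff_singleton_of_mem hzT
      have hTpos : 0 < T.ncard := (Set.ncard_pos (Set.toFinite T)).mpr hTne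
      have := Finset.card_le_card himage
      omega
    -- choose a contact vertex in each component
    have hcomp : ∀ K : {K // K ∈ O}, ∃ v ∈ K.1, G.Adj v (f K) := by
      intro K
      obtain ⟨-, y, hy, hadj⟩ := (htmem K (f K)).mp (hfmem K)
      exact ⟨y, hy, hadj⟩
    choose vK hvKmem hvKadj using hcomp
    -- the sub-Tutte condition inside each component minus its contact vertex
    have hsub : ∀ K : {K // K ∈ O}, ∀ T'' ⊆ K.1 \ {vK K},
        oddCount G ((K.1 \ {vK K}) \ T'') ≤ T''.ncard := by
      intro K T'' hT''sub
      by_contra hgt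
      push_neg at hgt
      have hc := hOmem K.1 K.2
      have hKodd : Odd K.1.ncard := hallodd K.1 hc
      have hvmem : vK K ∈ K.1 := hvKmem K
      have hKB : K.1 ⊆ B \ T := hc.subset
      have hA1 : (K.1 \ {vK K}).ncard = K.1.ncard - 1 :=
        Set.ncard_diff_singleton_of_mem hvmem
      have hA2 : ((K.1 \ {vK K}) \ T'').ncard = K.1.ncard - 1 - T''.ncard := by
        rw [Set.ncard_diff hT''sub (Set.toFinite _), hA1]
      have hpar := oddCount_parity G ((K.1 \ {vK K}) \ T'')
      have hKpos : 0 < K.1.ncard := (Set.ncard_pos (Set.toFinite _)).mpr hc.nonempty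
      have hT''le : T''.ncard ≤ K.1.ncard - 1 := by
        have := Set.ncard_le_ncard hT''sub (Set.toFinite _)
        omega
      have hodd2 : K.1.ncard % 2 = 1 := Nat.odd_iff.mp hKodd
      have hge : T''.ncard + 2 ≤ oddCount G ((K.1 \ {vK K}) \ T'') := by
        rw [hA2] at hpar
        omega
      set W : Set V := (T ∪ {vK K}) ∪ T'' with hWdef
      have hvnotT : vK K ∉ T := (hKB hvmem).2
      have hT''K : T'' ⊆ K.1 := hT''sub.trans Set.diff_subset
      have hT''T : Disjoint T'' T := by
        rw [Set.disjoint_left]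
        exact fun a ha hT => (hKB (hT''K ha)).2 hT
      have hvT'' : vK K ∉ T'' := fun h => (hT''sub h).2 rfl
      have hWB : W ⊆ B := by
        rw [hWdef]
        refine Set.union_subset (Set.union_subset hTB ?_) ?_
        · simpa using (hKB hvmem).1
        · exact (hT''K.trans (hKB.trans Set.diff_subset))
      have hWcard : W.ncard = T.ncard + 1 + T''.ncard := by
        rw [hWdef, Set.ncard_union_eq ?d1 (Set.toFinite _) (Set.toFinite _),
          Set.ncard_union_eq ?d2 (Set.toFinite _) (Set.toFinite _), Set.ncard_singleton]
        case d2 =>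
          rw [Set.disjoint_singleton_right]
          exact hvnotT
        case d1 =>
          rw [Set.disjoint_union_left]
          constructor
          · exact hT''T.symm
          · rw [Set.disjoint_singleton_left]
            exact hvT''
      have hBW : B \ W = ((B \ T) \ {vK K}) \ T'' := by
        rw [hWdef]
        ext z
        simp only [Set.mem_diff, Set.mem_union, Set.mem_singleton_iff]
        tauto
      set s₁ := ((compsF G (B \ T)).filter (fun C => Odd C.ncard)).erase K.1 with hs₁def
      have hs₁card : s₁.card = T.ncard - 1 := by
        rw [hs₁def, Finset.card_erase_of_mem (mem_oddCompsF.mpr ⟨hc, hKodd⟩)]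
        have hrfl : ((compsF G (B \ T)).filter (fun C => Odd C.ncard)).card
            = oddCount G (B \ T) := rfl
        rw [hrfl, hTtight]
      set s₂ := (compsF G ((K.1 \ {vK K}) \ T'')).filter (fun C => Odd C.ncard) with hs₂def
      have hs₂sub : ∀ C ∈ s₂, C ⊆ K.1 := by
        intro C hC
        exact ((mem_oddCompsF.mp hC).1.subset.trans Set.diff_subset).trans Set.diff_subset
      have hdisj12 : Disjoint s₁ s₂ := by
        rw [Finset.disjoint_left]
        intro C hC1 hC2
        rw [hs₁def, Finset.mem_erase] at hC1
        obtain ⟨hCne, hCmem⟩ := hC1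
        have hCcomp := (mem_oddCompsF.mp hCmem).1
        have hCdisj : Disjoint C K.1 := (hCcomp.disjoint_or_eq hc).resolve_right hCne
        obtain ⟨x, hx⟩ := (mem_oddCompsF.mp hC2).1.nonempty
        exact Set.disjoint_left.mp hCdisj ((mem_oddCompsF.mp hC2).1.subset.trans
          (Set.diff_subset.trans Set.diff_subset) hx |> fun _ => hx) (hs₂sub C hC2 hx)
      have htrans : ∀ C ∈ s₁ ∪ s₂, IsComp G (B \ W) C ∧ Odd C.ncard := by
        intro C hC
        rcases Finset.mem_union.mp hC with hC | hC
        · rw [hs₁def, Finset.mem_erase] at hC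
          obtain ⟨hCne, hCmem⟩ := hC
          obtain ⟨hCcomp, hCodd⟩ := mem_oddCompsF.mp hCmem
          have hCdisj : Disjoint C K.1 := (hCcomp.disjoint_or_eq hc).resolve_right hCne
          refine ⟨hCcomp.transfer ?_ ?_, hCodd⟩
          · rw [hBW]
            intro x hx
            refine ⟨⟨hCcomp.subset hx, fun h => Set.disjoint_left.mp hCdisj hx (h ▸ hvmem)⟩,
              fun h => Set.disjoint_left.mp hCdisj hx (hT''K h)⟩
          · intro y hy z hadj hz
            rw [hBW] at hz
            exact hCcomp.closed hy hadj hz.1.1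
        · obtain ⟨hCcomp, hCodd⟩ := mem_oddCompsF.mp hC
          refine ⟨hCcomp.transfer ?_ ?_, hCodd⟩
          · rw [hBW]
            intro x hx
            have := hCcomp.subset hx
            exact ⟨⟨hKB this.1.1, this.1.2⟩, this.2⟩
          · intro y hy z hadj hz
            rw [hBW] at hz
            have hzK : z ∈ K.1 := hc.closed (hs₂sub C hC hy) hadj hz.1.1
            exact hCcomp.closed hy hadj ⟨⟨hzK, hz.1.2⟩, hz.2⟩
      have hcount := le_oddCount htrans
      rw [Finset.card_union_of_disjoint hdisj12, hs₁card] at hcount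
      have hTpos : 0 < T.ncard := (Set.ncard_pos (Set.toFinite T)).mpr hTne
      have hWle := hyp W hWB
      have hWtight : W ∈ 𝒯 := by
        refine ⟨hWB, le_antisymm hWle ?_⟩
        have : s₂.card = oddCount G ((K.1 \ {vK K}) \ T'') := rfl
        omega
      have heq := hTmax' W hWtight (by rw [hWdef]; exact (Set.subset_union_left).trans Set.subset_union_left)
      apply hvnotT
      rw [heq, hWdef]
      exact Set.mem_union_left _ (Set.mem_union_right _ rfl)
    -- matchings inside each component minus its contact vertex
    have hM : ∀ K : {K // K ∈ O}, ∃ M : G.Subgraph, M.IsMatching ∧ M.verts = K.1 \ {vK K} := by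
      intro K
      have hc := hOmem K.1 K.2
      obtain ⟨w, hw⟩ := hTne
      have hKB : K.1 \ {vK K} ⊂ B := by
        refine ⟨(Set.diff_subset.trans hc.subset).trans Set.diff_subset, fun hsub' => ?_⟩
        have := hsub' (hTB hw)
        exact (hc.subset this.1).2 hw
      have hlt := Set.ncard_lt_ncard hKB (Set.toFinite B)
      exact ih _ (by omega) (hsub K)
    choose MK hMKmatch hMKverts using hM
    set N : {K // K ∈ O} → G.Subgraph := fun K => MK K ⊔ G.subgraphOfAdj (hvKadj K) with hNdef
    have hNverts : ∀ K, (N K).verts = K.1 ∪ {f K} := by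
      intro K
      rw [hNdef]
      simp only [Subgraph.verts_sup, hMKverts, subgraphOfAdj_verts]
      ext x
      simp only [Set.mem_union, Set.mem_diff, Set.mem_singleton_iff, Set.mem_insert_iff]
      constructor
      · rintro (⟨h1, _⟩ | (rfl | rfl))
        · exact Or.inl h1
        · exact Or.inl (hvKmem K)
        · exact Or.inr rfl
      · rintro (h | rfl)
        · by_cases hx : x = vK K
          · exact Or.inr (Or.inl hx)
          · exact Or.inl ⟨h, hx⟩
        · exact Or.inr (Or.inr rfl)
    have hNmatch : ∀ K, (N K).IsMatching := by
      intro K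
      refine (hMKmatch K).sup (Subgraph.IsMatching.subgraphOfAdj _) ?_
      rw [(hMKmatch K).support_eq_verts, (Subgraph.IsMatching.subgraphOfAdj _).support_eq_verts,
        hMKverts, subgraphOfAdj_verts]
      have hc := hOmem K.1 K.2
      rw [Set.disjoint_left]
      rintro a ⟨haK, hane⟩ (rfl | rfl)
      · exact hane rfl
      · exact (hc.subset haK).2 (hfT K)
    have hdisjN : Pairwise fun K K' : {K // K ∈ O} => Disjoint (N K).support (N K').support := by
      intro K K' hne
      rw [(hNmatch K).support_eq_verts, (hNmatch K').support_eq_verts, hNverts, hNverts]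
      have hKne : K.1 ≠ K'.1 := fun h => hne (Subtype.val_injective h)
      have hc := hOmem K.1 K.2
      have hc' := hOmem K'.1 K'.2
      have hdisjKK : Disjoint K.1 K'.1 := (hc.disjoint_or_eq hc').resolve_right hKne
      have hfne : f K ≠ f K' := fun h => hne (hfinj h)
      rw [Set.disjoint_left]
      rintro a (haK | rfl) (haK' | ha')
      · exact Set.disjoint_left.mp hdisjKK haK haK'
      · exact (hc.subset haK).2 (ha' ▸ hfT K')
      · exact (hc'.subset haK').2 (hfT K)
      · exact hfne ha'
    refine ⟨⨆ K, N K, Subgraph.IsMatching.iSup hNmatch hdisjN, ?_⟩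
    rw [Subgraph.verts_iSup]
    apply Set.eq_of_subset_of_subset
    · intro x hx
      obtain ⟨K, hK⟩ := Set.mem_iUnion.mp hx
      rw [hNverts] at hK
      rcases hK with hK | hK
      · exact ((hOmem K.1 K.2).subset.trans Set.diff_subset) hK
      · exact hTB (hK ▸ hfT K)
    · intro x hx
      by_cases hxT : x ∈ T
      · obtain ⟨K, hK⟩ := hfsurj x hxT
        apply Set.mem_iUnion.mpr ⟨K, ?_⟩
        rw [hNverts]
        exact Or.inr (hK ▸ rfl)
      · have hxBT : x ∈ B \ T := ⟨hx, hxT⟩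
        have hcomp : IsComp G (B \ T) (compOf G (B \ T) x) := isComp_compOf hxBT
        have hmem : compOf G (B \ T) x ∈ O := mem_compsF.mpr hcomp
        apply Set.mem_iUnion.mpr ⟨⟨_, hmem⟩, ?_⟩
        rw [hNverts]
        exact Or.inl (mem_compOf_self hxBT)

lemma induce_reachable_iff {B : Set V} {x y : ↥B} :
    (G.induce B).Reachable x y ↔ conn G B ↑x ↑y := by
  rw [reachable_iff_reflTransGen]
  constructor
  · intro h
    refine ⟨x.2, ?_⟩
    induction h with
    | refl => exact .refl
    | tail _ step ih =>
      rename_i b c _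
      exact ih.tail ⟨step, b.2, c.2⟩
  · rintro ⟨hx, h⟩
    have key : ∀ z, Relation.ReflTransGen (radj G B) ↑x z →
        ∀ hz : z ∈ B, Relation.ReflTransGen (G.induce B).Adj x ⟨z, hz⟩ := by
      intro z h
      induction h with
      | refl =>
        intro hz
        have he : (⟨↑x, hz⟩ : ↥B) = x := Subtype.ext rfl
        rw [he]
      | tail hprev hstep ih =>
        intro hz
        exact (ih hstep.2.1).tail (by exact hstep.1)
    have := key ↑y h y.2
    rwa [Subtype.coe_eta] at this

lemma image_supp_eq_compOf {B : Set V} (x : ↥B) :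
    Subtype.val '' ((G.induce B).connectedComponentMk x).supp = compOf G B ↑x := by
  ext z
  simp only [Set.mem_image, ConnectedComponent.mem_supp_iff, ConnectedComponent.eq]
  constructor
  · rintro ⟨y, hy, rfl⟩
    exact (induce_reachable_iff.mp hy.symm)
  · intro hz
    exact ⟨⟨z, hz.mem_right⟩, induce_reachable_iff.mpr hz.symm, rfl⟩

lemma oddComp_eq_oddCount (G : SimpleGraph V) (S : Set V) :
    oddComp G S = oddCount G Sᶜ := by
  classical
  rw [oddCount_eq, ← Nat.card_coe_set_eq]
  have hcard : ∀ C : (G.induce Sᶜ).ConnectedComponent,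
      Nat.card C.supp = (Subtype.val '' C.supp).ncard := by
    intro C
    rw [Set.ncard_image_of_injective _ Subtype.val_injective, ← Nat.card_coe_set_eq]
  have hbij : ∀ C : (G.induce Sᶜ).ConnectedComponent, IsComp G Sᶜ (Subtype.val '' C.supp) := by
    intro C
    induction C using ConnectedComponent.ind with
    | _ x =>
      rw [image_supp_eq_compOf]
      exact isComp_compOf x.2
  apply Nat.card_eq_of_bijective
    (f := fun C => ⟨Subtype.val '' C.1.supp, hbij C.1, by rw [← hcard]; exact C.2⟩)
  constructor
  · rintro ⟨C, hC⟩ ⟨C', hC'⟩ h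
    simp only [Subtype.mk_eq_mk] at h
    exact Subtype.ext (ConnectedComponent.supp_injective
      (Set.image_injective.mpr Subtype.val_injective h))
  · rintro ⟨K, ⟨x, hx, rfl⟩, hodd⟩
    refine ⟨⟨(G.induce Sᶜ).connectedComponentMk ⟨x, hx⟩, ?_⟩, ?_⟩
    · rw [hcard, image_supp_eq_compOf]
      exact hodd
    · apply Subtype.ext
      simp only
      rw [image_supp_eq_compOf]

lemma odd_comp_out {M : G.Subgraph} (hM : M.IsMatching) {S K : Set V}
    (hSc : Sᶜ ⊆ M.verts) (hK : IsComp G Sᶜ K) (hodd : Odd K.ncard) :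
    ∃ p ∈ S, ∃ y ∈ K, M.Adj y p := by
  classical
  by_contra h
  push_neg at h
  have hin : ∀ y ∈ K, ∀ w, M.Adj y w → w ∈ K := by
    intro y hy w hw
    have hwS : w ∈ Sᶜ := by
      by_contra hwS
      rw [Set.notMem_compl_iff] at hwS
      exact h w hwS y hy hw
    exact hK.closed hy (M.adj_sub hw) hwS
  have hM' : (M.induce K).IsMatching := by
    intro v hv
    simp only [Subgraph.induce_verts] at hv
    obtain ⟨w, hw, huniq⟩ := hM (hSc (hK.subset hv))
    refine ⟨w, ⟨hv, hin v hv w hw, hw⟩, ?_⟩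
    intro y hy
    rw [Subgraph.induce_adj] at hy
    exact huniq y hy.2.2
  haveI : Fintype (M.induce K).verts := Fintype.ofFinite _
  have heven := hM'.even_card
  rw [Set.toFinset_card] at heven
  have hKcard : K.ncard = Fintype.card (M.induce K).verts := by
    rw [← Nat.card_eq_fintype_card]
    have : (M.induce K).verts = K := rfl
    rw [this, Nat.card_coe_set_eq]
  rw [← hKcard] at heven
  exact (Nat.not_even_iff_odd.mpr hodd) heven

lemma easy_dir {M : G.Subgraph} (hM : M.IsMatching) (S : Set V)
    (hSc : Sᶜ ⊆ M.verts) : oddCount G Sᶜ ≤ S.ncard := by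
  classical
  rcases isEmpty_or_nonempty V with hV | hV
  · have : oddCount G Sᶜ = 0 := by
      rw [oddCount_eq]
      have : {K : Set V | IsComp G Sᶜ K ∧ Odd K.ncard} = ∅ := by
        ext K
        simp only [Set.mem_setOf_eq, Set.mem_empty_iff_false, iff_false, not_and]
        intro hK
        obtain ⟨x, _⟩ := hK.nonempty
        exact absurd trivial (by exact (hV.false x).elim)
      rw [this]
      simp
    omega
  rw [oddCount_eq]
  have hex : ∀ K : Set V, (IsComp G Sᶜ K ∧ Odd K.ncard) → ∃ p, p ∈ S ∧ ∃ y ∈ K, M.Adj y p := by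
    intro K hK
    obtain ⟨p, hp, hy⟩ := odd_comp_out hM hSc hK.1 hK.2
    exact ⟨p, hp, hy⟩
  set g : Set V → V := fun K =>
    if h : IsComp G Sᶜ K ∧ Odd K.ncard then (hex K h).choose else Classical.arbitrary V
    with hgdef
  apply Set.ncard_le_ncard_of_injOn g
  · intro K hK
    rw [Set.mem_setOf_eq] at hK
    rw [hgdef]
    simp only [dif_pos hK]
    exact (hex K hK).choose_spec.1
  · intro K hK K' hK' hgg
    rw [Set.mem_setOf_eq] at hK hK'
    obtain ⟨hp, y, hy, hadj⟩ := (hex K hK).choose_spec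
    obtain ⟨hp', y', hy', hadj'⟩ := (hex K' hK').choose_spec
    rw [hgdef] at hgg
    simp only [dif_pos hK, dif_pos hK'] at hgg
    rw [hgg] at hadj
    obtain ⟨w, hw, huniq⟩ := hM hadj.snd_mem
    have h1 : y = w := huniq y hadj.symm
    have h2 : y' = w := huniq y' hadj'.symm
    exact hK.1.eq_of_mem hK'.1 hy (h1.trans h2.symm ▸ hy')

end TutteAux

theorem stmt_3 {V : Type*} [Fintype V] (G : SimpleGraph V) (hconn : G.Connected) :
    ((∃ M : G.Subgraph, M.IsPerfectMatching) ∨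
      (∀ x : V, ∃ M : G.Subgraph, M.IsMatching ∧ M.verts = {x}ᶜ)) ↔
    (∀ S : Set V, S.Nonempty → oddComp G S ≤ S.ncard) := by
  classical
  have hcardV : (Set.univ : Set V).ncard = Fintype.card V := by
    rw [Set.ncard_univ, Nat.card_eq_fintype_card]
  constructor
  · rintro (⟨M, hM⟩ | hfc) S hS
    · rw [oddComp_eq_oddCount]
      exact easy_dir hM.1 S (by rw [hM.2.verts_eq_univ]; exact Set.subset_univ _)
    · obtain ⟨x, hx⟩ := hS
      obtain ⟨M, hMm, hMv⟩ := hfc x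
      rw [oddComp_eq_oddCount]
      refine easy_dir hMm S ?_
      rw [hMv]
      exact Set.compl_subset_compl.mpr (Set.singleton_subset_iff.mpr hx)
  · intro h
    rcases Nat.even_or_odd (Fintype.card V) with he | ho
    · left
      have hcond : ∀ T ⊆ (Set.univ : Set V), oddCount G (Set.univ \ T) ≤ T.ncard := by
        intro T _
        rcases T.eq_empty_or_nonempty with rfl | hTne
        · simp only [Set.diff_empty, Set.ncard_empty, Nat.le_zero]
          rw [oddCount_eq]
          have hempty : {K : Set V | IsComp G Set.univ K ∧ Odd K.ncard} = ∅ := by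
            ext K
            simp only [Set.mem_setOf_eq, Set.mem_empty_iff_false, iff_false, not_and]
            rintro ⟨x, -, rfl⟩
            have huniv : compOf G Set.univ x = Set.univ := by
              ext z
              simp only [Set.mem_univ, iff_true]
              refine ⟨trivial, ?_⟩
              exact Relation.ReflTransGen.mono (fun a b hab => ⟨hab, trivial, trivial⟩)
                _ _ ((reachable_iff_reflTransGen x z).mp (hconn.preconnected x z))
            rw [huniv, hcardV]
            exact Nat.not_odd_iff_even.mpr he
          rw [hempty, Set.ncard_empty]
        · have h1 := h T hTne
          rw [oddComp_eq_oddCount] at h1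
          rwa [show Set.univ \ T = Tᶜ by ext z; simp]
      obtain ⟨M, hMm, hMv⟩ := tutte_main G (Set.univ : Set V).ncard Set.univ le_rfl hcond
      exact ⟨M, hMm, Subgraph.isSpanning_iff.mpr hMv⟩
    · right
      intro x
      have hcond : ∀ T ⊆ ({x}ᶜ : Set V), oddCount G ({x}ᶜ \ T) ≤ T.ncard := by
        intro T hT
        have hxT : x ∉ T := fun hxT => (hT hxT) rfl
        have hS : (insert x T).Nonempty := Set.insert_nonempty x T
        have h1 := h (insert x T) hS
        rw [oddComp_eq_oddCount] at h1
        have hc : (insert x T)ᶜ = {x}ᶜ \ T := by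
          ext z
          simp only [Set.mem_compl_iff, Set.mem_insert_iff, Set.mem_diff,
            Set.mem_singleton_iff]
          tauto
        rw [hc] at h1
        have hcard : (insert x T).ncard = T.ncard + 1 :=
          Set.ncard_insert_of_notMem hxT (Set.toFinite T)
        have hpar := oddCount_parity G ({x}ᶜ \ T)
        have hdiff : ({x}ᶜ \ T : Set V) = Set.univ \ insert x T := by
          rw [hc.symm]
          ext z; simp
        have hncard : ({x}ᶜ \ T : Set V).ncard = Fintype.card V - (T.ncard + 1) := by
          rw [hdiff, Set.ncard_diff (Set.subset_univ _) (Set.toFinite _), hcardV, hcard]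
        have hle : T.ncard + 1 ≤ Fintype.card V := by
          rw [← hcard, ← hcardV]
          exact Set.ncard_le_ncard (Set.subset_univ _) (Set.toFinite _)
        rw [hcard] at h1
        rw [hncard] at hpar
        rw [Nat.odd_iff] at ho
        omega
      obtain ⟨M, hMm, hMv⟩ := tutte_main G ({x}ᶜ : Set V).ncard {x}ᶜ le_rfl hcond
      exact ⟨M, hMm, hMv⟩
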